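/- All Delaunay triangles of a sparse periodic ground state are regular: let S be a coset t + Λ₁ or t + Λ₂ (t ∈ ℤ²), and let u, v, w ∈ S be distinct sites whose embedded images f(u), f(v), f(w) are not collinear, such that there exist c ∈ ℝ² and r > 0 with ‖f(u) − c‖ = ‖f(v) − c‖ = ‖f(w) − c‖ = r and ‖f(s) − c‖ ≥ r for every s ∈ S. Then the triangle f(u)f(v)f(w) is equilateral with side length √7. -/

import Mathlib

/-- Adjacency in the triangular lattice, modeled on `ℤ × ℤ`. -/
def TriAdj (u v : ℤ × ℤ) : Prop :=
  (u.1 - v.1, u.2 - v.2) ∈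
    ({(1, 0), (-1, 0), (0, 1), (0, -1), (1, -1), (-1, 1)} : Finset (ℤ × ℤ))

/-- A set of sites is independent if no two of its elements are adjacent. -/
def IsIndependent (S : Set (ℤ × ℤ)) : Prop :=
  ∀ u ∈ S, ∀ v ∈ S, ¬ TriAdj u v

/-- Maximal independent set of the triangular lattice. -/
def IsMIS (S : Set (ℤ × ℤ)) : Prop :=
  IsIndependent S ∧ ∀ u ∉ S, ∃ v ∈ S, TriAdj u v

/-- Embedding of the triangular lattice into the Euclidean plane (identified
with `ℂ`): `f(i,j) = i·(1,0) + j·(1/2, √3/2)`. -/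
noncomputable def emb (p : ℤ × ℤ) : ℂ :=
  ⟨(p.1 : ℝ) + (p.2 : ℝ) / 2, (p.2 : ℝ) * Real.sqrt 3 / 2⟩

/-- The index-7 sublattice `Λ₁ = {(a,b) : a + 3b ≡ 0 (mod 7)}`. -/
def Lam1 : Set (ℤ × ℤ) := {p | ((p.1 + 3 * p.2 : ℤ) : ZMod 7) = 0}

/-- The index-7 sublattice `Λ₂ = {(a,b) : a + 5b ≡ 0 (mod 7)}`. -/
def Lam2 : Set (ℤ × ℤ) := {p | ((p.1 + 5 * p.2 : ℤ) : ZMod 7) = 0}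

/-- The coset `t + Λ`. -/
def Coset (t : ℤ × ℤ) (Λ : Set (ℤ × ℤ)) : Set (ℤ × ℤ) :=
  {p | (p.1 - t.1, p.2 - t.2) ∈ Λ}

section Aux

lemma sq3 : Real.sqrt 3 ^ 2 = 3 := Real.sq_sqrt (by norm_num)

lemma normsq (z : ℂ) : ‖z‖^2 = z.re^2 + z.im^2 := by
  rw [Complex.sq_norm, Complex.normSq_apply]; ring

lemma emb_re (p : ℤ × ℤ) : (emb p).re = (p.1 : ℝ) + (p.2 : ℝ) / 2 := rfl
lemma emb_im (p : ℤ × ℤ) : (emb p).im = (p.2 : ℝ) * Real.sqrt 3 / 2 := rfl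

lemma emb_sub_sq (u v : ℤ × ℤ) : ‖emb u - emb v‖^2 =
    (((u.1 - v.1 : ℤ) : ℝ)^2 + ((u.1 - v.1 : ℤ) : ℝ) * ((u.2 - v.2 : ℤ) : ℝ)
      + ((u.2 - v.2 : ℤ) : ℝ)^2) := by
  rw [normsq, Complex.sub_re, Complex.sub_im, emb_re, emb_im, emb_re, emb_im]
  push_cast
  linear_combination (((u.2 : ℝ) - (v.2 : ℝ))^2 / 4) * sq3

lemma dec1 (zr zi : ℝ) : ∃ α β : ℝ,
    zr = 2*α + (5/2)*β ∧ zi = Real.sqrt 3 * α - (Real.sqrt 3 / 2) * β :=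
  ⟨zi*Real.sqrt 3/3 + ((2*zr)/7 - (4*zi*Real.sqrt 3)/21)/2,
   (2*zr)/7 - (4*zi*Real.sqrt 3)/21, by ring, by linear_combination (-zi/3) * sq3⟩

lemma dec2 (zr zi : ℝ) : ∃ α β : ℝ,
    zr = (5/2)*α + 2*β ∧ zi = (Real.sqrt 3 / 2) * α - Real.sqrt 3 * β :=
  ⟨2*((zr - 5*zi*Real.sqrt 3/3)/7) + 2*zi*Real.sqrt 3/3,
   (zr - 5*zi*Real.sqrt 3/3)/7, by ring, by linear_combination (-zi/3) * sq3⟩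

lemma tri (x y : ℝ) (hx : 0 ≤ x) (hy : 0 ≤ y) (hxy : x + y ≤ 1) :
    x^2 + x*y + y^2 ≤ 1/3 ∨ (x-1)^2 + (x-1)*y + y^2 ≤ 1/3 ∨
      x^2 + x*(y-1) + (y-1)^2 ≤ 1/3 := by
  by_cases h1 : 2*x + y ≤ 1 ∧ x + 2*y ≤ 1
  · left; nlinarith [h1.1, h1.2]
  · rcases le_total y x with hyx | hyx
    · right; left
      have h2 : 1 ≤ 2*x + y := by
        rcases not_and_or.mp h1 with h | h <;> nlinarith
      nlinarith
    · right; right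
      have h2 : 1 ≤ x + 2*y := by
        rcases not_and_or.mp h1 with h | h <;> nlinarith
      nlinarith

lemma cover (α β : ℝ) : ∃ m n : ℤ,
    (α - m)^2 + (α - m)*(β - n) + (β - n)^2 ≤ 1/3 := by
  set x : ℝ := α - ⌊α⌋ with hxdef
  set y : ℝ := β - ⌊β⌋ with hydef
  have hx0 : 0 ≤ x := by simp [hxdef, Int.floor_le]
  have hy0 : 0 ≤ y := by simp [hydef, Int.floor_le]
  have hx1 : x < 1 := by
    by_contra h; push_neg at h; linarith [Int.lt_floor_add_one α]
  have hy1 : y < 1 := by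
    by_contra h; push_neg at h; linarith [Int.lt_floor_add_one β]
  rcases le_total (x + y) 1 with h | h
  · rcases tri x y hx0 hy0 h with h3 | h3 | h3
    · exact ⟨⌊α⌋, ⌊β⌋, by convert h3 using 2⟩
    · exact ⟨⌊α⌋ + 1, ⌊β⌋, by push_cast; convert h3 using 2 <;> ring⟩
    · exact ⟨⌊α⌋, ⌊β⌋ + 1, by push_cast; convert h3 using 2 <;> ring⟩
  · have h3 := tri (1 - x) (1 - y) (by linarith) (by linarith) (by linarith)
    rcases h3 with h3 | h3 | h3
    · exact ⟨⌊α⌋ + 1, ⌊β⌋ + 1, by push_cast; nlinarith [h3]⟩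
    · exact ⟨⌊α⌋, ⌊β⌋ + 1, by push_cast; nlinarith [h3]⟩
    · exact ⟨⌊α⌋ + 1, ⌊β⌋, by push_cast; nlinarith [h3]⟩

lemma seven_le (a b e : ℤ) (he : (7:ℤ) ∣ e^2 - e + 1) (h : (7:ℤ) ∣ a + e*b)
    (hne : ¬(a = 0 ∧ b = 0)) : (7:ℤ) ≤ a^2 + a*b + b^2 := by
  obtain ⟨k, hk⟩ := h
  obtain ⟨m, hm⟩ := he
  have ha : a = 7*k - e*b := by linarith
  have hdvd : (7:ℤ) ∣ a^2 + a*b + b^2 := by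
    refine ⟨7*k^2 - 2*e*k*b + k*b + m*b^2, ?_⟩
    rw [ha]; nlinarith [hm]
  have hpos : 0 < a^2 + a*b + b^2 := by
    rcases eq_or_ne b 0 with hb | hb
    · subst hb
      have hha : a ≠ 0 := by tauto
      rcases lt_or_gt_of_ne hha with h' | h' <;> nlinarith
    · have h1 : 1 ≤ b^2 := by rcases lt_or_gt_of_ne hb with h' | h' <;> nlinarith
      nlinarith [sq_nonneg (2*a + b)]
  exact Int.le_of_dvd hpos hdvd

lemma core (a1 a2 b1 b2 d1 d2 r : ℝ)
    (ha : a1^2 + a2^2 = r^2) (hb : b1^2 + b2^2 = r^2) (hd : d1^2 + d2^2 = r^2)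
    (hab : 7 ≤ (a1-b1)^2 + (a2-b2)^2) (hbd : 7 ≤ (b1-d1)^2 + (b2-d2)^2)
    (had : 7 ≤ (a1-d1)^2 + (a2-d2)^2) (hr2 : r^2 ≤ 7/3) :
    (a1-b1)^2 + (a2-b2)^2 = 7 ∧ (b1-d1)^2 + (b2-d2)^2 = 7 ∧
      (a1-d1)^2 + (a2-d2)^2 = 7 := by
  set x := a1*b1 + a2*b2 with hxd
  set y := b1*d1 + b2*d2 with hyd
  set z := a1*d1 + a2*d2 with hzd
  have e1 : (a1-b1)^2 + (a2-b2)^2 = 2*r^2 - 2*x := by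
    rw [hxd]; linear_combination ha + hb
  have e2 : (b1-d1)^2 + (b2-d2)^2 = 2*r^2 - 2*y := by
    rw [hyd]; linear_combination hb + hd
  have e3 : (a1-d1)^2 + (a2-d2)^2 = 2*r^2 - 2*z := by
    rw [hzd]; linear_combination ha + hd
  have hx : x ≤ r^2 - 7/2 := by linarith
  have hy : y ≤ r^2 - 7/2 := by linarith
  have hz : z ≤ r^2 - 7/2 := by linarith
  have hsum : 0 ≤ 3*r^2 + 2*(x + y + z) := by
    nlinarith [sq_nonneg (a1+b1+d1), sq_nonneg (a2+b2+d2)]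
  exact ⟨by linarith, by linarith, by linarith⟩

/-- The abstract argument: if `S` has minimal embedded distance² ≥ 7 and
covering radius² ≤ 7/3 then every Delaunay triangle is regular. -/
lemma main_core (S : Set (ℤ × ℤ))
    (Hmin : ∀ p ∈ S, ∀ q ∈ S, p ≠ q → (7:ℝ) ≤ ‖emb p - emb q‖^2)
    (Hcov : ∀ c : ℂ, ∃ s ∈ S, ‖emb s - c‖^2 ≤ 7/3)
    (u v w : ℤ × ℤ) (hu : u ∈ S) (hv : v ∈ S) (hw : w ∈ S)
    (huv : u ≠ v) (hvw : v ≠ w) (huw : u ≠ w)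
    (c : ℂ) (r : ℝ) (hr : 0 < r)
    (hcu : ‖emb u - c‖ = r) (hcv : ‖emb v - c‖ = r) (hcw : ‖emb w - c‖ = r)
    (hdelaunay : ∀ s ∈ S, r ≤ ‖emb s - c‖) :
    ‖emb u - emb v‖ = Real.sqrt 7 ∧ ‖emb v - emb w‖ = Real.sqrt 7 ∧
      ‖emb u - emb w‖ = Real.sqrt 7 := by
  obtain ⟨s, hsS, hs2⟩ := Hcov c
  have hr2 : r^2 ≤ 7/3 := by
    have h1 : r ≤ ‖emb s - c‖ := hdelaunay s hsS
    calc r^2 ≤ ‖emb s - c‖^2 := by nlinarith [norm_nonneg (emb s - c)]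
    _ ≤ 7/3 := hs2
  have ha : (emb u - c).re^2 + (emb u - c).im^2 = r^2 := by
    rw [← normsq, hcu]
  have hb : (emb v - c).re^2 + (emb v - c).im^2 = r^2 := by
    rw [← normsq, hcv]
  have hd : (emb w - c).re^2 + (emb w - c).im^2 = r^2 := by
    rw [← normsq, hcw]
  have key : ∀ p q : ℤ × ℤ, ‖emb p - emb q‖^2 =
      ((emb p - c).re - (emb q - c).re)^2 + ((emb p - c).im - (emb q - c).im)^2 := by
    intro p q
    rw [normsq]
    simp only [Complex.sub_re, Complex.sub_im]
    ring
  have hab := Hmin u hu v hv huv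
  have hbd := Hmin v hv w hw hvw
  have had := Hmin u hu w hw huw
  rw [key u v] at hab
  rw [key v w] at hbd
  rw [key u w] at had
  obtain ⟨E1, E2, E3⟩ := core (emb u - c).re (emb u - c).im (emb v - c).re
    (emb v - c).im (emb w - c).re (emb w - c).im r ha hb hd hab hbd had hr2
  refine ⟨?_, ?_, ?_⟩ <;>
    rw [← Real.sqrt_sq (norm_nonneg _)]
  · rw [key u v, E1]
  · rw [key v w, E2]
  · rw [key u w, E3]

end Aux

/-- All Delaunay triangles of a sparse periodic ground state (a coset of `Λ₁`
or `Λ₂`) are regular: equilateral of side length `√7`. -/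
theorem sparse_PGS_delaunay_regular (t : ℤ × ℤ) (S : Set (ℤ × ℤ))
    (hS : S = Coset t Lam1 ∨ S = Coset t Lam2)
    (u v w : ℤ × ℤ) (hu : u ∈ S) (hv : v ∈ S) (hw : w ∈ S)
    (huv : u ≠ v) (hvw : v ≠ w) (huw : u ≠ w)
    (hncol : ¬ Collinear ℝ ({emb u, emb v, emb w} : Set ℂ))
    (c : ℂ) (r : ℝ) (hr : 0 < r)
    (hcu : ‖emb u - c‖ = r) (hcv : ‖emb v - c‖ = r) (hcw : ‖emb w - c‖ = r)
    (hdelaunay : ∀ s ∈ S, r ≤ ‖emb s - c‖) :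
    ‖emb u - emb v‖ = Real.sqrt 7 ∧ ‖emb v - emb w‖ = Real.sqrt 7 ∧
      ‖emb u - emb w‖ = Real.sqrt 7 := by
  refine main_core S ?_ ?_ u v w hu hv hw huv hvw huw c r hr hcu hcv hcw hdelaunay
  · -- minimal distance
    intro p hp q hq hpq
    have hne : ¬(p.1 - q.1 = 0 ∧ p.2 - q.2 = 0) := by
      rintro ⟨h1, h2⟩
      exact hpq (Prod.ext (by omega) (by omega))
    have h7 : (7:ℤ) ≤ (p.1-q.1)^2 + (p.1-q.1)*(p.2-q.2) + (p.2-q.2)^2 := by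
      rcases hS with rfl | rfl
      · have hp' := (ZMod.intCast_zmod_eq_zero_iff_dvd _ 7).mp hp
        have hq' := (ZMod.intCast_zmod_eq_zero_iff_dvd _ 7).mp hq
        refine seven_le _ _ 3 (by norm_num) ?_ hne
        obtain ⟨k1, hk1⟩ := hp'
        obtain ⟨k2, hk2⟩ := hq'
        exact ⟨k1 - k2, by simp only [Prod.fst, Prod.snd] at hk1 hk2; push_cast at hk1 hk2; omega⟩
      · have hp' := (ZMod.intCast_zmod_eq_zero_iff_dvd _ 7).mp hp
        have hq' := (ZMod.intCast_zmod_eq_zero_iff_dvd _ 7).mp hq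
        refine seven_le _ _ 5 (by norm_num) ?_ hne
        obtain ⟨k1, hk1⟩ := hp'
        obtain ⟨k2, hk2⟩ := hq'
        exact ⟨k1 - k2, by simp only [Prod.fst, Prod.snd] at hk1 hk2; push_cast at hk1 hk2; omega⟩
    rw [emb_sub_sq]
    exact_mod_cast h7
  · -- covering radius
    intro c'
    rcases hS with rfl | rfl
    · obtain ⟨a, b, hzr, hzi⟩ := dec1 (c'.re - (emb t).re) (c'.im - (emb t).im)
      rw [emb_re] at hzr
      rw [emb_im] at hzi
      obtain ⟨m, n, hmn⟩ := cover a b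
      refine ⟨(t.1 + m + 3*n, t.2 + 2*m - n), ?_, ?_⟩
      · show (((t.1 + m + 3*n) - t.1 + 3 * ((t.2 + 2*m - n) - t.2) : ℤ) : ZMod 7) = 0
        exact (ZMod.intCast_zmod_eq_zero_iff_dvd _ 7).mpr ⟨m, by ring⟩
      · have hre : (emb (t.1 + m + 3*n, t.2 + 2*m - n) - c').re
            = 2*((m:ℝ) - a) + (5/2)*((n:ℝ) - b) := by
          rw [Complex.sub_re, emb_re]; push_cast; linear_combination -hzr
        have him : (emb (t.1 + m + 3*n, t.2 + 2*m - n) - c').im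
            = Real.sqrt 3 * ((m:ℝ) - a) - (Real.sqrt 3 / 2) * ((n:ℝ) - b) := by
          rw [Complex.sub_im, emb_im]; push_cast; linear_combination -hzi
        rw [normsq, hre, him]
        have hid : (2*((m:ℝ) - a) + (5/2)*((n:ℝ) - b))^2
            + (Real.sqrt 3 * ((m:ℝ) - a) - (Real.sqrt 3 / 2) * ((n:ℝ) - b))^2
            = 7*((a - m)^2 + (a - m)*(b - n) + (b - n)^2) := by
          linear_combination ((((m:ℝ) - a) - ((n:ℝ) - b)/2)^2) * sq3
        rw [hid]; linarith
    · obtain ⟨a, b, hzr, hzi⟩ := dec2 (c'.re - (emb t).re) (c'.im - (emb t).im)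
      rw [emb_re] at hzr
      rw [emb_im] at hzi
      obtain ⟨m, n, hmn⟩ := cover a b
      refine ⟨(t.1 + 2*m + 3*n, t.2 + m - 2*n), ?_, ?_⟩
      · show (((t.1 + 2*m + 3*n) - t.1 + 5 * ((t.2 + m - 2*n) - t.2) : ℤ) : ZMod 7) = 0
        exact (ZMod.intCast_zmod_eq_zero_iff_dvd _ 7).mpr ⟨m - n, by ring⟩
      · have hre : (emb (t.1 + 2*m + 3*n, t.2 + m - 2*n) - c').re
            = (5/2)*((m:ℝ) - a) + 2*((n:ℝ) - b) := by
          rw [Complex.sub_re, emb_re]; push_cast; linear_combination -hzr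
        have him : (emb (t.1 + 2*m + 3*n, t.2 + m - 2*n) - c').im
            = (Real.sqrt 3 / 2) * ((m:ℝ) - a) - Real.sqrt 3 * ((n:ℝ) - b) := by
          rw [Complex.sub_im, emb_im]; push_cast; linear_combination -hzi
        rw [normsq, hre, him]
        have hid : ((5/2)*((m:ℝ) - a) + 2*((n:ℝ) - b))^2
            + ((Real.sqrt 3 / 2) * ((m:ℝ) - a) - Real.sqrt 3 * ((n:ℝ) - b))^2
            = 7*((a - m)^2 + (a - m)*(b - n) + (b - n)^2) := by
          linear_combination ((((m:ℝ) - a)/2 - ((n:ℝ) - b))^2) * sq3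
        rw [hid]; linarith
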